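/- For any finite simple graph G with m edges, the sum over all edges uv of (d(u) + d(v) - 2)^3 equals ξ₄(G) + 3·ReZG₃(G) - 6·F(G) - 12·M₂(G) + 12·M₁(G) - 8m, where these invariants are defined below. (This computes the F-index of the line graph L(G), since the line graph vertex corresponding to edge uv has degree d(u)+d(v)-2.) -/

import Mathlib

open SimpleGraph Finset
open scoped Classical

noncomputable section
namespace Paper

variable {V : Type*} [Fintype V]

/-- Degree as an integer. -/
def d (G : SimpleGraph V) (v : V) : ℤ := G.degree v

/-- Number of edges. -/
def m (G : SimpleGraph V) : ℤ := G.edgeFinset.card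

/-- Sum over unordered edges of a symmetric vertex-pair function. -/
def edgeSum (G : SimpleGraph V) (f : V → V → ℤ) (hf : ∀ u v, f u v = f v u) : ℤ :=
  ∑ e ∈ G.edgeFinset, Sym2.lift ⟨f, hf⟩ e

/-- First Zagreb index. -/
def M1 (G : SimpleGraph V) : ℤ := ∑ v, d G v ^ 2

/-- Second Zagreb index. -/
def M2 (G : SimpleGraph V) : ℤ :=
  edgeSum G (fun u v => d G u * d G v) (by intros; ring)

/-- F-index. -/
def F (G : SimpleGraph V) : ℤ := ∑ v, d G v ^ 3

/-- ξ₄. -/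
def xi4 (G : SimpleGraph V) : ℤ := ∑ v, d G v ^ 4

/-- Redefined third Zagreb index. -/
def ReZG3 (G : SimpleGraph V) : ℤ :=
  edgeSum G (fun u v => d G u * d G v * (d G u + d G v)) (by intros; ring)

/-- F-coindex: sum over edges of the complement with degrees in G. -/
def Fbar (G : SimpleGraph V) : ℤ :=
  edgeSum Gᶜ (fun u v => d G u ^ 2 + d G v ^ 2) (by intros; ring)

/-- Subdivision graph. -/
def subdivision (G : SimpleGraph V) : SimpleGraph (V ⊕ G.edgeSet) where
  Adj x y :=
    match x, y with
    | Sum.inl u, Sum.inr e => u ∈ (e : Sym2 V)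
    | Sum.inr e, Sum.inl u => u ∈ (e : Sym2 V)
    | _, _ => False
  symm := ⟨by rintro (u | e) (v | f) h <;> first | exact h | exact h.elim⟩
  loopless := ⟨by rintro (u | e) <;> simp⟩

/-- Vertex-semitotal graph. -/
def vertexSemitotal (G : SimpleGraph V) : SimpleGraph (V ⊕ G.edgeSet) where
  Adj x y :=
    match x, y with
    | Sum.inl u, Sum.inl v => G.Adj u v
    | Sum.inl u, Sum.inr e => u ∈ (e : Sym2 V)
    | Sum.inr e, Sum.inl u => u ∈ (e : Sym2 V)
    | _, _ => False
  symm := by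
    constructor
    rintro (u | e) (v | f) h
    · exact G.symm.symm _ _ h
    · exact h
    · exact h
    · exact h.elim
  loopless := by
    constructor
    rintro (u | e) h
    · exact G.loopless.irrefl u h
    · exact h

/-- Edge-semitotal graph. -/
def edgeSemitotal (G : SimpleGraph V) : SimpleGraph (V ⊕ G.edgeSet) where
  Adj x y :=
    match x, y with
    | Sum.inl u, Sum.inr e => u ∈ (e : Sym2 V)
    | Sum.inr e, Sum.inl u => u ∈ (e : Sym2 V)
    | Sum.inr e, Sum.inr f => e ≠ f ∧ ∃ v, v ∈ (e : Sym2 V) ∧ v ∈ (f : Sym2 V)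
    | _, _ => False
  symm := by
    constructor
    rintro (u | e) (v | f) h
    · exact h.elim
    · exact h
    · exact h
    · obtain ⟨hne, w, h1, h2⟩ := h
      exact ⟨hne.symm, w, h2, h1⟩
  loopless := by
    constructor
    rintro (u | e) h
    · exact h
    · exact h.1 rfl

/-- Total graph. -/
def total (G : SimpleGraph V) : SimpleGraph (V ⊕ G.edgeSet) where
  Adj x y :=
    match x, y with
    | Sum.inl u, Sum.inl v => G.Adj u v
    | Sum.inl u, Sum.inr e => u ∈ (e : Sym2 V)
    | Sum.inr e, Sum.inl u => u ∈ (e : Sym2 V)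
    | Sum.inr e, Sum.inr f => e ≠ f ∧ ∃ v, v ∈ (e : Sym2 V) ∧ v ∈ (f : Sym2 V)
  symm := by
    constructor
    rintro (u | e) (v | f) h
    · exact G.symm.symm _ _ h
    · exact h
    · exact h
    · obtain ⟨hne, w, h1, h2⟩ := h
      exact ⟨hne.symm, w, h2, h1⟩
  loopless := by
    constructor
    rintro (u | e) h
    · exact G.loopless.irrefl u h
    · exact h.1 rfl

/-- Paraline graph: line graph of the subdivision graph. -/
def paraline (G : SimpleGraph V) : SimpleGraph (subdivision G).edgeSet :=
  (subdivision G).lineGraph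



lemma edgeSum_add' (G : SimpleGraph V) (g : V → ℤ) :
    ∑ e ∈ G.edgeFinset, Sym2.lift ⟨fun u v => g u + g v, by intros; ring⟩ e
      = ∑ v, d G v * g v := by
  have h1 : ∀ e ∈ G.edgeFinset,
      Sym2.lift ⟨fun u v => g u + g v, by intros; ring⟩ e
        = ∑ w ∈ Finset.univ, if w ∈ e then g w else 0 := by
    intro e he
    induction e using Sym2.ind with
    | _ u v =>
      have hne : u ≠ v := by
        intro h
        exact G.irrefl (h ▸ SimpleGraph.mem_edgeFinset.mp he)
      have hfil : (Finset.univ.filter (fun w => w ∈ s(u, v))) = {u, v} := by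
        ext w; simp [Sym2.mem_iff]
      rw [Sym2.lift_mk, ← Finset.sum_filter, hfil, Finset.sum_pair hne]
  rw [Finset.sum_congr rfl h1, Finset.sum_comm]
  refine Finset.sum_congr rfl fun v _ => ?_
  rw [← Finset.sum_filter]
  simp only [Finset.sum_const, nsmul_eq_mul]
  rw [← G.incidenceFinset_eq_filter, G.card_incidenceFinset_eq_degree]
  simp [d, mul_comm]

/-- F-index of the line graph, as an edge sum over G. -/
theorem stmt0 {V : Type*} [Fintype V] (G : SimpleGraph V) :
    edgeSum G (fun u v => (d G u + d G v - 2) ^ 3) (by intros; ring) =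
      xi4 G + 3 * ReZG3 G - 6 * F G - 12 * M2 G + 12 * M1 G - 8 * m G := by
  have key : ∀ e ∈ G.edgeFinset,
      Sym2.lift ⟨fun u v => (d G u + d G v - 2) ^ 3, by intros; ring⟩ e =
      Sym2.lift ⟨fun u v => d G u ^ 3 + d G v ^ 3, by intros; ring⟩ e
      + 3 * Sym2.lift ⟨fun u v => d G u * d G v * (d G u + d G v), by intros; ring⟩ e
      - 6 * Sym2.lift ⟨fun u v => d G u ^ 2 + d G v ^ 2, by intros; ring⟩ e
      - 12 * Sym2.lift ⟨fun u v => d G u * d G v, by intros; ring⟩ e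
      + 12 * Sym2.lift ⟨fun u v => d G u + d G v, by intros; ring⟩ e - 8 := by
    intro e _
    induction e using Sym2.ind with
    | _ u v => simp only [Sym2.lift_mk]; ring
  unfold edgeSum ReZG3 M2 edgeSum
  rw [Finset.sum_congr rfl key]
  simp only [Finset.sum_add_distrib, Finset.sum_sub_distrib, ← Finset.mul_sum,
    Finset.sum_const, nsmul_eq_mul]
  rw [edgeSum_add' G (fun v => d G v ^ 3), edgeSum_add' G (fun v => d G v ^ 2),
    edgeSum_add' G (d G)]
  have e4 : ∑ v, d G v * d G v ^ 3 = xi4 G :=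
    Finset.sum_congr rfl fun v _ => by ring
  have e3 : ∑ v, d G v * d G v ^ 2 = F G :=
    Finset.sum_congr rfl fun v _ => by ring
  have e2 : ∑ v, d G v * d G v = M1 G :=
    Finset.sum_congr rfl fun v _ => by ring
  rw [e4, e3, e2]
  show _ = _ + _ - _ - 12 * (∑ e ∈ G.edgeFinset,
    Sym2.lift ⟨fun u v => d G u * d G v, by intros; ring⟩ e) + _ - _
  unfold m
  ring

end Paper
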